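/- Foata's transformation Φ is a bijection from S_n to itself satisfying maj(σ) = inv(Φ(σ)) for all σ ∈ S_n. -/

import Mathlib

def gammaGo (p : ℤ → Bool) : List ℤ → List ℤ → List ℤ
  | acc, [] => acc.reverse
  | acc, c :: d =>
      if p c then c :: (acc.reverse ++ gammaGo p [] d) else gammaGo p (c :: acc) d

/-- Foata's operation `γ_x`. -/
def gammaF (x : ℤ) (r : List ℤ) : List ℤ :=
  match r.getLast? with
  | none => []
  | some y =>
      if y ≤ x then gammaGo (fun z => decide (z ≤ x)) [] r
      else gammaGo (fun z => decide (x < z)) [] r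

/-- Foata's second fundamental transformation: `Φ(r x) = γ_x(Φ(r)) x`. -/
def foataF (r : List ℤ) : List ℤ :=
  r.foldl (fun st y => gammaF y st ++ [y]) []

/-- The set of words representing elements of `S_n`: rearrangements of `1 2 ⋯ n`. -/
def permWordsW (n : ℕ) : Set (List ℤ) :=
  {l | l.Perm ((List.range n).map fun i => (i : ℤ) + 1)}

/-- The inversion number of a word. -/
def invW (l : List ℤ) : ℕ :=
  ((Finset.range l.length ×ˢ Finset.range l.length).filter fun p =>
    p.1 < p.2 ∧ l.getD p.2 0 < l.getD p.1 0).card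

/-- The major index of a word (sum of 1-indexed descent positions). -/
def majW (l : List ℤ) : ℕ :=
  ∑ i ∈ Finset.range (l.length - 1), if l.getD (i + 1) 0 < l.getD i 0 then i + 1 else 0

/-- Number of inversions, head-recursive form. -/
def invL : List ℤ → ℕ
  | [] => 0
  | a :: l => l.countP (fun b => decide (b < a)) + invL l

/-- Cross inversions between two blocks. -/
def crossL (X Y : List ℤ) : ℕ := (X.map fun a => Y.countP (fun b => decide (b < a))).sum

lemma crossL_nil (Y : List ℤ) : crossL [] Y = 0 := rfl

lemma crossL_cons (a : ℤ) (X Y : List ℤ) :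
    crossL (a :: X) Y = Y.countP (fun b => decide (b < a)) + crossL X Y := rfl

lemma invL_append (X Y : List ℤ) : invL (X ++ Y) = invL X + invL Y + crossL X Y := by
  induction X with
  | nil => simp [invL, crossL]
  | cons a X ih => simp [invL, ih, crossL_cons, List.countP_append]; ring

lemma crossL_cons_right (X : List ℤ) (c : ℤ) (Y : List ℤ) :
    crossL X (c :: Y) = crossL X Y + X.countP (fun a => decide (c < a)) := by
  induction X with
  | nil => simp [crossL]
  | cons a X ih =>
    simp [crossL_cons, ih, List.countP_cons]
    by_cases h : c < a <;> simp [h] <;> ring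

lemma crossL_perm_right (X : List ℤ) {Y Y' : List ℤ} (h : Y.Perm Y') :
    crossL X Y = crossL X Y' := by
  induction X with
  | nil => rfl
  | cons a X ih => rw [crossL_cons, crossL_cons, ih, h.countP_eq]

lemma crossL_singleton (X : List ℤ) (x : ℤ) :
    crossL X [x] = X.countP fun a => decide (x < a) := by
  induction X with
  | nil => rfl
  | cons a X ih =>
    rw [crossL_cons, ih, List.countP_cons]
    simp [List.countP_singleton]
    by_cases h : x < a <;> simp [h] <;> omega

lemma gammaGo_perm (p : ℤ → Bool) (l : List ℤ) :
    ∀ acc, (gammaGo p acc l).Perm (acc.reverse ++ l) := by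
  induction l with
  | nil => intro acc; simp [gammaGo]
  | cons c d ih =>
    intro acc
    cases hc : p c with
    | true =>
      simp only [gammaGo, hc, if_true]
      have h1 : (gammaGo p [] d).Perm d := by simpa using ih []
      exact ((h1.append_left acc.reverse).cons c).trans List.perm_middle.symm
    | false =>
      simp only [gammaGo, hc, if_false]
      have := ih (c :: acc)
      simpa [List.append_assoc] using this
lemma gammaGo_block (p : ℤ → Bool) {c : ℤ} (hc : p c = true) (d : List ℤ) :
    ∀ (A acc : List ℤ), (∀ a ∈ A, p a = false) →
    gammaGo p acc (A ++ c :: d) = c :: (acc.reverse ++ A ++ gammaGo p [] d) := by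
  intro A
  induction A with
  | nil => intro acc _; simp [gammaGo, hc]
  | cons a A ih =>
    intro acc hA
    have ha : p a = false := hA a List.mem_cons_self
    simp only [List.cons_append, gammaGo, ha, Bool.false_eq_true, if_false, List.append_eq]
    rw [ih (a :: acc) (fun b hb => hA b (List.mem_cons_of_mem a hb))]
    simp [List.append_assoc]

lemma takeWhile_append_of (q : ℤ → Bool) (A B : List ℤ) (h : ∀ a ∈ A, q a = true) :
    (A ++ B).takeWhile q = A ++ B.takeWhile q := by
  induction A with
  | nil => simp
  | cons a A ih =>
    have := h a List.mem_cons_self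
    simp [List.takeWhile_cons, this, ih fun b hb => h b (List.mem_cons_of_mem a hb)]

lemma dropWhile_append_of (q : ℤ → Bool) (A B : List ℤ) (h : ∀ a ∈ A, q a = true) :
    (A ++ B).dropWhile q = B.dropWhile q := by
  induction A with
  | nil => simp
  | cons a A ih =>
    have := h a List.mem_cons_self
    simp [List.dropWhile_cons, this, ih fun b hb => h b (List.mem_cons_of_mem a hb)]

/-- Decomposition of a `gammaGo` output when the last letter satisfies `p`. -/
lemma gammaGo_decomp (p : ℤ → Bool) (l : List ℤ) (hl : l ≠ [])
    (hlast : ∀ y ∈ l.getLast?, p y = true) :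
    ∃ c d, p c = true ∧ (∀ a ∈ l.takeWhile (fun z => !p z), p a = false) ∧
      l = l.takeWhile (fun z => !p z) ++ c :: d ∧
      gammaGo p [] l = c :: (l.takeWhile (fun z => !p z) ++ gammaGo p [] d) := by
  set q : ℤ → Bool := fun z => !p z with hq
  have hdrop : l.dropWhile q ≠ [] := by
    intro h
    rw [List.dropWhile_eq_nil_iff] at h
    have hy := List.getLast?_eq_getLast hl
    have h1 := hlast _ hy
    have h2 := h _ (List.getLast_mem hl)
    rw [hq] at h2
    simp [h1] at h2
  obtain ⟨c, d, hcd⟩ := List.exists_cons_of_ne_nil hdrop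
  have hc : p c = true := by
    have h1 := List.head_dropWhile_not q hdrop
    have h2 : (l.dropWhile q).head? = some c := by rw [hcd]; rfl
    rw [List.head?_eq_head hdrop] at h2
    injection h2 with h2
    rw [h2, hq] at h1
    simpa using h1
  have hA : ∀ a ∈ l.takeWhile q, p a = false := by
    intro a ha
    have := List.mem_takeWhile_imp ha
    rw [hq] at this
    simpa using this
  have hsplit : l = l.takeWhile q ++ c :: d := by
    conv_lhs => rw [← (List.takeWhile_append_dropWhile : l.takeWhile q ++ l.dropWhile q = l)]
    rw [hcd]
  refine ⟨c, d, hc, hA, hsplit, ?_⟩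
  conv_lhs => rw [hsplit]
  rw [gammaGo_block p hc d _ [] hA]
  simp

def gInv (p : ℤ → Bool) : List ℤ → List ℤ
  | [] => []
  | c :: d =>
      (d.takeWhile fun z => !p z) ++ c :: gInv p (d.dropWhile fun z => !p z)
termination_by l => l.length
decreasing_by
  simp only [List.length_cons]
  exact Nat.lt_succ_of_le ((List.dropWhile_sublist _).length_le)

lemma getLast?_append_cons (A : List ℤ) (c : ℤ) {d : List ℤ} (hd : d ≠ []) :
    (A ++ c :: d).getLast? = d.getLast? := by
  rw [List.getLast?_append]
  cases d with
  | nil => exact absurd rfl hd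
  | cons e d' =>
    rw [List.getLast?_cons_cons, List.getLast?_eq_getLast (by simp : e :: d' ≠ [])]
    rfl

lemma gInv_gammaGo (p : ℤ → Bool) (n : ℕ) : ∀ l : List ℤ, l.length ≤ n →
    (∀ y ∈ l.getLast?, p y = true) → gInv p (gammaGo p [] l) = l := by
  induction n with
  | zero =>
    intro l hn _
    have : l = [] := List.eq_nil_of_length_eq_zero (Nat.le_zero.mp hn)
    subst this
    simp [gammaGo, gInv]
  | succ n ih =>
    intro l hn hlast
    rcases eq_or_ne l [] with rfl | hl
    · simp [gammaGo, gInv]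
    obtain ⟨c, d, hc, hA, hsplit, heq⟩ := gammaGo_decomp p l hl hlast
    set q : ℤ → Bool := fun z => !p z with hq
    have hAq : ∀ a ∈ l.takeWhile q, q a = true := by
      intro a ha; rw [hq]; simp [hA a ha]
    have hdlen : d.length ≤ n := by
      have := congrArg List.length hsplit
      simp at this
      omega
    rw [heq, gInv, takeWhile_append_of q _ _ hAq, dropWhile_append_of q _ _ hAq]
    rcases eq_or_ne d [] with rfl | hd
    · simp only [gammaGo, List.reverse_nil, List.takeWhile_nil, List.dropWhile_nil]
      simp [gInv, hsplit.symm]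
    · have hlast_d : ∀ y ∈ d.getLast?, p y = true := by
        intro y hy
        apply hlast
        rw [hsplit, getLast?_append_cons _ _ hd]
        exact hy
      obtain ⟨c', d', hc', _, _, heq'⟩ := gammaGo_decomp p d hd hlast_d
      have hqc' : q c' = false := by rw [hq]; simp [hc']
      rw [heq']
      simp only [List.takeWhile_cons, hqc', if_false, List.dropWhile_cons, Bool.false_eq_true]
      rw [← heq', ih d hdlen hlast_d]
      simp
      exact hsplit.symm
lemma gammaGo_nil (p : ℤ → Bool) (acc : List ℤ) : gammaGo p acc [] = acc.reverse := by
  simp [gammaGo]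

lemma gammaGo_cons_pos (p : ℤ → Bool) {c : ℤ} (hc : p c = true) (acc d : List ℤ) :
    gammaGo p acc (c :: d) = c :: (acc.reverse ++ gammaGo p [] d) := by
  simp [gammaGo, hc]

lemma gammaGo_cons_neg (p : ℤ → Bool) {c : ℤ} (hc : p c = false) (acc d : List ℤ) :
    gammaGo p acc (c :: d) = gammaGo p (c :: acc) d := by
  simp [gammaGo, hc]

lemma invL_gammaGo_lt (p : ℤ → Bool) (hp : ∀ a c, p a = false → p c = true → c < a) :
    ∀ (l acc : List ℤ), (∀ a ∈ acc, p a = false) → (l = [] → acc = []) →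
      (∀ y ∈ l.getLast?, p y = true) →
      invL (gammaGo p acc l) + acc.length + l.countP (fun z => !p z)
        = invL (acc.reverse ++ l) := by
  intro l
  induction l with
  | nil => intro acc _ h2 _; simp [gammaGo, h2 rfl, invL]
  | cons c d ih =>
    intro acc hacc hne hlast
    have hlast_d : ∀ y ∈ d.getLast?, p y = true := by
      intro y hy
      cases d with
      | nil => simp at hy
      | cons e d' => exact hlast y (by rwa [List.getLast?_cons_cons])
    cases hc : p c with
    | true =>
      rw [gammaGo_cons_pos p hc]
      have hGperm : (gammaGo p [] d).Perm d := by simpa using gammaGo_perm p d []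
      have hIH : invL (gammaGo p [] d) + d.countP (fun z => !p z) = invL d := by
        have := ih [] (by simp) (fun _ => rfl) hlast_d
        simpa using this
      have e1 : invL (c :: (acc.reverse ++ gammaGo p [] d))
          = (acc.reverse ++ gammaGo p [] d).countP (fun b => decide (b < c))
            + invL (acc.reverse ++ gammaGo p [] d) := rfl
      have e2 : (acc.reverse).countP (fun b => decide (b < c)) = 0 := by
        rw [List.countP_eq_zero]
        intro a ha
        have : p a = false := hacc a (by simpa using ha)
        have := hp a c this hc
        simp
        omega
      have e3 : (gammaGo p [] d).countP (fun b => decide (b < c))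
          = d.countP (fun b => decide (b < c)) := hGperm.countP_eq _
      have e4 : crossL acc.reverse (gammaGo p [] d) = crossL acc.reverse d :=
        crossL_perm_right _ hGperm
      have e5 : (acc.reverse).countP (fun a => decide (c < a)) = acc.reverse.length := by
        rw [List.countP_eq_length]
        intro a ha
        have : p a = false := hacc a (by simpa using ha)
        have := hp a c this hc
        simpa
      rw [e1, invL_append, invL_append, List.countP_append, e2, e3, e4]
      rw [crossL_cons_right, e5]
      simp only [invL, List.countP_cons, hc, List.length_reverse, Bool.not_true,
        Bool.false_eq_true, if_false, reduceIte]
      omega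
    | false =>
      rw [gammaGo_cons_neg p hc]
      have hd : d ≠ [] := by
        intro h
        subst h
        have := hlast c (by simp)
        rw [this] at hc
        exact Bool.noConfusion hc
      have hIH := ih (c :: acc) (by
          intro a ha
          rcases List.mem_cons.mp ha with rfl | ha
          · exact hc
          · exact hacc a ha)
        (fun h => absurd h hd) hlast_d
      have e6 : (c :: acc).reverse ++ d = acc.reverse ++ c :: d := by
        simp [List.append_assoc]
      rw [e6] at hIH
      simp only [List.length_cons] at hIH
      simp only [List.countP_cons, hc, Bool.not_false, Bool.false_eq_true, if_false,
        reduceIte]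
      omega

lemma invL_gammaGo_gt (p : ℤ → Bool) (hp : ∀ a c, p a = false → p c = true → a < c) :
    ∀ (l acc : List ℤ), (∀ a ∈ acc, p a = false) → (l = [] → acc = []) →
      (∀ y ∈ l.getLast?, p y = true) →
      invL (gammaGo p acc l)
        = invL (acc.reverse ++ l) + acc.length + l.countP (fun z => !p z) := by
  intro l
  induction l with
  | nil => intro acc _ h2 _; simp [gammaGo, h2 rfl, invL]
  | cons c d ih =>
    intro acc hacc hne hlast
    have hlast_d : ∀ y ∈ d.getLast?, p y = true := by
      intro y hy
      cases d with
      | nil => simp at hy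
      | cons e d' => exact hlast y (by rwa [List.getLast?_cons_cons])
    cases hc : p c with
    | true =>
      rw [gammaGo_cons_pos p hc]
      have hGperm : (gammaGo p [] d).Perm d := by simpa using gammaGo_perm p d []
      have hIH : invL (gammaGo p [] d) = invL d + d.countP (fun z => !p z) := by
        have := ih [] (by simp) (fun _ => rfl) hlast_d
        simpa using this
      have e1 : invL (c :: (acc.reverse ++ gammaGo p [] d))
          = (acc.reverse ++ gammaGo p [] d).countP (fun b => decide (b < c))
            + invL (acc.reverse ++ gammaGo p [] d) := rfl
      have e2 : (acc.reverse).countP (fun b => decide (b < c)) = acc.reverse.length := by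
        rw [List.countP_eq_length]
        intro a ha
        have : p a = false := hacc a (by simpa using ha)
        have := hp a c this hc
        simpa
      have e3 : (gammaGo p [] d).countP (fun b => decide (b < c))
          = d.countP (fun b => decide (b < c)) := hGperm.countP_eq _
      have e4 : crossL acc.reverse (gammaGo p [] d) = crossL acc.reverse d :=
        crossL_perm_right _ hGperm
      have e5 : (acc.reverse).countP (fun a => decide (c < a)) = 0 := by
        rw [List.countP_eq_zero]
        intro a ha
        have : p a = false := hacc a (by simpa using ha)
        have := hp a c this hc
        simp
        omega
      rw [e1, invL_append, invL_append, List.countP_append, e2, e3, e4]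
      rw [crossL_cons_right, e5]
      simp only [invL, List.countP_cons, hc, List.length_reverse, Bool.not_true,
        Bool.false_eq_true, if_false, reduceIte]
      omega
    | false =>
      rw [gammaGo_cons_neg p hc]
      have hd : d ≠ [] := by
        intro h
        subst h
        have := hlast c (by simp)
        rw [this] at hc
        exact Bool.noConfusion hc
      have hIH := ih (c :: acc) (by
          intro a ha
          rcases List.mem_cons.mp ha with rfl | ha
          · exact hc
          · exact hacc a ha)
        (fun h => absurd h hd) hlast_d
      have e6 : (c :: acc).reverse ++ d = acc.reverse ++ c :: d := by
        simp [List.append_assoc]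
      rw [e6] at hIH
      simp only [List.length_cons] at hIH
      simp only [List.countP_cons, hc, Bool.not_false, Bool.false_eq_true, if_false,
        reduceIte]
      omega
lemma gammaF_perm (x : ℤ) (r : List ℤ) : (gammaF x r).Perm r := by
  unfold gammaF
  cases h : r.getLast? with
  | none =>
    rw [List.getLast?_eq_none_iff] at h
    simp [h]
  | some y =>
    by_cases hy : y ≤ x
    · simp only [hy, if_true]
      simpa using gammaGo_perm _ r []
    · simp only [hy, if_false]
      simpa using gammaGo_perm _ r []

def gammaFInv (x : ℤ) (v : List ℤ) : List ℤ :=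
  match v.head? with
  | none => []
  | some c =>
      if c ≤ x then gInv (fun z => decide (z ≤ x)) v else gInv (fun z => decide (x < z)) v

lemma gammaFInv_gammaF (x : ℤ) (r : List ℤ) : gammaFInv x (gammaF x r) = r := by
  rcases eq_or_ne r [] with rfl | hr
  · rfl
  have hy := List.getLast?_eq_getLast hr
  set y := r.getLast hr with hydef
  by_cases hyx : y ≤ x
  · set p : ℤ → Bool := fun z => decide (z ≤ x) with hp
    have hlast : ∀ z ∈ r.getLast?, p z = true := by
      intro z hz; rw [hy] at hz; injection hz with hz; subst hz; simp [hp, hyx]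
    have hG : gammaF x r = gammaGo p [] r := by
      unfold gammaF; rw [hy]; simp [hyx, hp]
    obtain ⟨c, d, hc, _, _, heq⟩ := gammaGo_decomp p r hr hlast
    have hcx : c ≤ x := by simpa [hp] using hc
    rw [hG, heq]
    unfold gammaFInv
    simp only [List.head?_cons, hcx, if_true]
    rw [← heq]
    exact gInv_gammaGo p r.length r le_rfl hlast
  · set p : ℤ → Bool := fun z => decide (x < z) with hp
    have hlast : ∀ z ∈ r.getLast?, p z = true := by
      intro z hz; rw [hy] at hz; injection hz with hz; subst hz
      simp [hp]; omega
    have hG : gammaF x r = gammaGo p [] r := by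
      unfold gammaF; rw [hy]; simp [hyx, hp]
    obtain ⟨c, d, hc, _, _, heq⟩ := gammaGo_decomp p r hr hlast
    have hcx : ¬ c ≤ x := by simp [hp] at hc; omega
    rw [hG, heq]
    unfold gammaFInv
    simp only [List.head?_cons, hcx, if_false]
    rw [← heq]
    exact gInv_gammaGo p r.length r le_rfl hlast

lemma gammaF_inj (x : ℤ) {a b : List ℤ} (h : gammaF x a = gammaF x b) : a = b := by
  rw [← gammaFInv_gammaF x a, ← gammaFInv_gammaF x b, h]

lemma foataF_nil : foataF [] = [] := rfl

lemma foataF_snoc (l : List ℤ) (x : ℤ) :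
    foataF (l ++ [x]) = gammaF x (foataF l) ++ [x] := by
  unfold foataF
  rw [List.foldl_append]
  rfl

lemma foataF_perm (l : List ℤ) : (foataF l).Perm l := by
  induction l using List.reverseRecOn with
  | nil => rfl
  | append_singleton l x ih =>
    rw [foataF_snoc]
    exact ((gammaF_perm x (foataF l)).trans ih).append_right [x]

lemma foataF_getLast? (l : List ℤ) : (foataF l).getLast? = l.getLast? := by
  induction l using List.reverseRecOn with
  | nil => rfl
  | append_singleton l x _ =>
    rw [foataF_snoc, List.getLast?_concat, List.getLast?_concat]

lemma foataF_inj : ∀ r s : List ℤ, foataF r = foataF s → r = s := by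
  intro r
  induction r using List.reverseRecOn with
  | nil =>
    intro s h
    have := (foataF_perm s).length_eq
    rw [← h] at this
    simpa using (List.eq_nil_of_length_eq_zero this.symm).symm
  | append_singleton l x ih =>
    intro s h
    induction s using List.reverseRecOn with
    | nil =>
      have := (foataF_perm (l ++ [x])).length_eq
      rw [h] at this
      simp [foataF_nil] at this
    | append_singleton m y _ =>
      rw [foataF_snoc, foataF_snoc] at h
      obtain ⟨h1, h2⟩ := List.append_inj' h rfl
      injection h2 with h2 _
      subst h2
      rw [ih m (gammaF_inj x h1)]
lemma countP_eq_sum (q : ℤ → Bool) (l : List ℤ) :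
    l.countP q = ∑ j ∈ Finset.range l.length, if q (l.getD j 0) then 1 else 0 := by
  induction l with
  | nil => simp
  | cons a l ih =>
    rw [List.length_cons, Finset.sum_range_succ', List.countP_cons, ih]
    simp [List.getD_cons_succ, List.getD_cons_zero]

lemma invW_nil : invW [] = 0 := by simp [invW]

lemma invW_cons (a : ℤ) (l : List ℤ) :
    invW (a :: l) = l.countP (fun b => decide (b < a)) + invW l := by
  unfold invW
  rw [Finset.card_filter, Finset.card_filter, Finset.sum_product, Finset.sum_product]
  dsimp only
  rw [List.length_cons, Finset.sum_range_succ']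
  have h1 : ∀ i ∈ Finset.range l.length,
      (∑ j ∈ Finset.range (l.length + 1),
        if i + 1 < j ∧ (a :: l).getD j 0 < (a :: l).getD (i + 1) 0 then 1 else 0)
      = ∑ j ∈ Finset.range l.length,
        if i < j ∧ l.getD j 0 < l.getD i 0 then 1 else 0 := by
    intro i _
    rw [Finset.sum_range_succ']
    simp only [List.getD_cons_succ, Nat.add_lt_add_iff_right]
    simp
  rw [Finset.sum_congr rfl h1]
  have h2 : (∑ j ∈ Finset.range (l.length + 1),
      if 0 < j ∧ (a :: l).getD j 0 < (a :: l).getD 0 0 then 1 else 0)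
      = l.countP (fun b => decide (b < a)) := by
    rw [Finset.sum_range_succ', countP_eq_sum]
    simp [List.getD_cons_succ, List.getD_cons_zero]
  rw [h2]
  omega

lemma invW_eq_invL (l : List ℤ) : invW l = invL l := by
  induction l with
  | nil => simp [invW_nil, invL]
  | cons a l ih => rw [invW_cons, ih]; rfl

lemma majW_nil : majW [] = 0 := by simp [majW]

lemma majW_snoc (l : List ℤ) (hl : l ≠ []) (x : ℤ) :
    majW (l ++ [x]) = majW l + if x < l.getLast hl then l.length else 0 := by
  obtain ⟨k, hk⟩ : ∃ k, l.length = k + 1 := by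
    cases l with
    | nil => exact absurd rfl hl
    | cons b m => exact ⟨m.length, rfl⟩
  unfold majW
  rw [List.length_append, hk]
  simp only [List.length_singleton]
  have hrange : k + 1 + 1 - 1 = k + 1 := rfl
  rw [hrange, Finset.sum_range_succ]
  have h1 : ∀ i ∈ Finset.range k,
      (if (l ++ [x]).getD (i + 1) 0 < (l ++ [x]).getD i 0 then i + 1 else 0)
      = if l.getD (i + 1) 0 < l.getD i 0 then i + 1 else 0 := by
    intro i hi
    rw [Finset.mem_range] at hi
    rw [List.getD_append l [x] 0 i (by omega), List.getD_append l [x] 0 (i + 1) (by omega)]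
  rw [Finset.sum_congr rfl h1]
  have h2 : (l ++ [x]).getD (k + 1) 0 = x := by
    rw [List.getD_append_right l [x] 0 (k + 1) (by omega)]
    simp [hk]
  have h3 : (l ++ [x]).getD k 0 = l.getLast hl := by
    rw [List.getD_append l [x] 0 k (by omega), List.getD_eq_getElem l 0 (by omega),
      List.getLast_eq_getElem]
    congr 1
    omega
  rw [h2, h3]
  have h4 : k + 1 - 1 = k := rfl
  rw [h4]

lemma countP_compl (x : ℤ) (W : List ℤ) :
    W.countP (fun z => decide (z ≤ x)) + W.countP (fun z => decide (x < z)) = W.length := by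
  induction W with
  | nil => simp
  | cons a V ihV =>
    simp only [List.countP_cons, List.length_cons]
    rcases le_or_gt a x with h | h
    · simp [h, not_lt.mpr h]
      omega
    · simp [h, not_le.mpr h]
      omega

lemma maj_eq_invL (l : List ℤ) : majW l = invL (foataF l) := by
  induction l using List.reverseRecOn with
  | nil => rfl
  | append_singleton l x ih =>
    rcases eq_or_ne l [] with rfl | hl
    · have : foataF ([] ++ [x]) = [x] := by
        rw [foataF_snoc]
        rfl
      rw [this]
      simp [majW, invL]
    · rw [majW_snoc l hl x, foataF_snoc, invL_append, crossL_singleton]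
      set W := foataF l with hW
      have hWperm : W.Perm l := foataF_perm l
      have hWne : W ≠ [] := by
        intro h
        have := hWperm.length_eq
        rw [h] at this
        exact hl (List.eq_nil_of_length_eq_zero this.symm)
      have hy : l.getLast? = some (l.getLast hl) := List.getLast?_eq_getLast hl
      have hWlast : W.getLast? = some (l.getLast hl) := by
        rw [foataF_getLast?, hy]
      set y := l.getLast hl with hydef
      have hinvsingle : invL [x] = 0 := by simp [invL]
      by_cases hyx : y ≤ x
      · set p : ℤ → Bool := fun z => decide (z ≤ x) with hp
        have hG : gammaF x W = gammaGo p [] W := by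
          unfold gammaF
          rw [hWlast]
          simp [hyx, hp]
        have hcount : (fun z => !p z) = fun z => decide (x < z) := by
          funext z
          rw [hp]
          simp [← decide_not, not_le]
        have hkey := invL_gammaGo_lt p
          (by intro a c ha hc; rw [hp] at ha hc; simp at ha hc; omega)
          W [] (by simp) (fun _ => rfl) (by
            intro z hz
            rw [hWlast] at hz
            injection hz with hz
            subst hz
            simp [hp, hyx])
        rw [hcount] at hkey
        simp only [List.length_nil, List.reverse_nil, List.nil_append, Nat.add_zero] at hkey
        have hGoperm : (gammaGo p [] W).Perm W := by simpa using gammaGo_perm p W []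
        have hcG : (gammaGo p [] W).countP (fun a => decide (x < a))
            = W.countP (fun a => decide (x < a)) := hGoperm.countP_eq _
        rw [hG, hinvsingle]
        have hydesc : ¬ x < y := not_lt.mpr hyx
        rw [if_neg hydesc, ih]
        omega
      · set p : ℤ → Bool := fun z => decide (x < z) with hp
        have hG : gammaF x W = gammaGo p [] W := by
          unfold gammaF
          rw [hWlast]
          simp [hyx, hp]
        have hcount : (fun z => !p z) = fun z => decide (z ≤ x) := by
          funext z
          rw [hp]
          simp [← decide_not, not_lt]
        have hkey := invL_gammaGo_gt p
          (by intro a c ha hc; rw [hp] at ha hc; simp at ha hc; omega)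
          W [] (by simp) (fun _ => rfl) (by
            intro z hz
            rw [hWlast] at hz
            injection hz with hz
            subst hz
            simp [hp]
            omega)
        rw [hcount] at hkey
        simp only [List.length_nil, List.reverse_nil, List.nil_append, Nat.add_zero] at hkey
        have hsum : W.countP (fun z => decide (z ≤ x)) + W.countP p = W.length :=
          countP_compl x W
        have hGoperm : (gammaGo p [] W).Perm W := by simpa using gammaGo_perm p W []
        have hcG : (gammaGo p [] W).countP p = W.countP p := hGoperm.countP_eq _
        have hlen : W.length = l.length := hWperm.length_eq
        rw [hG, hinvsingle]
        rw [if_pos (not_le.mp hyx), ih]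
        omega

/-- Foata's `Φ` is a bijection of `S_n` onto itself with `maj σ = inv (Φ σ)`. -/
theorem stmt14 (n : ℕ) :
    Set.BijOn foataF (permWordsW n) (permWordsW n) ∧
    ∀ l ∈ permWordsW n, majW l = invW (foataF l) := by
  have hfin : (permWordsW n).Finite := by
    have heq : permWordsW n
        = ↑(((List.range n).map fun i => (i : ℤ) + 1).permutations.toFinset) := by
      ext l
      simp [permWordsW, List.mem_permutations]
    rw [heq]
    exact Finset.finite_toSet _
  have hmaps : Set.MapsTo foataF (permWordsW n) (permWordsW n) :=
    fun l hl => (foataF_perm l).trans hl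
  have hinj : Set.InjOn foataF (permWordsW n) :=
    fun a _ b _ h => foataF_inj a b h
  refine ⟨(hfin.injOn_iff_bijOn_of_mapsTo hmaps).mp hinj, fun l _ => ?_⟩
  rw [invW_eq_invL, maj_eq_invL]
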